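/- Let p ≥ 1, θ₀ ∈ ℝ^p, r > 0, τ₁ > 0. Let L : ℝ^p → ℝ be a differentiable convex function that is locally τ₁-strongly convex on the ball B_r(θ₀), and let θ̂ be a global minimizer of L with ‖θ̂ − θ₀‖₂ ≤ r/2. Then every θ ∈ ℝ^p with L(θ) − L(θ̂) ≤ τ₁ r²/4 satisfies ‖θ − θ̂‖₂ ≤ r/2, and consequently ‖θ − θ₀‖₂ ≤ r. -/

import Mathlib

open scoped RealInnerProductSpace

/-- if `L` is convex, differentiable, locally `τ₁`-strongly convex on the ball of
radius `r` around `θ₀`, and its global minimizer `θ̂` satisfies `‖θ̂ - θ₀‖ ≤ r/2`, then any `θ`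
with suboptimality gap at most `τ₁ r² / 4` satisfies `‖θ - θ̂‖ ≤ r/2` and `‖θ - θ₀‖ ≤ r`. -/
theorem stmt_0 {p : ℕ} (hp : 1 ≤ p) (θ₀ : EuclideanSpace ℝ (Fin p)) (r τ₁ : ℝ)
    (hr : 0 < r) (hτ₁ : 0 < τ₁)
    (L : EuclideanSpace ℝ (Fin p) → ℝ) (hdiff : Differentiable ℝ L)
    (hconv : ConvexOn ℝ Set.univ L)
    (hlsc : ∀ θ₁ θ₂ : EuclideanSpace ℝ (Fin p), ‖θ₁ - θ₀‖ ≤ r → ‖θ₂ - θ₀‖ ≤ r →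
      L θ₁ - L θ₂ ≥ ⟪gradient L θ₂, θ₁ - θ₂⟫ + τ₁ * ‖θ₁ - θ₂‖ ^ 2)
    (θhat : EuclideanSpace ℝ (Fin p)) (hmin : ∀ θ, L θhat ≤ L θ)
    (hclose : ‖θhat - θ₀‖ ≤ r / 2)
    (θ : EuclideanSpace ℝ (Fin p)) (hθ : L θ - L θhat ≤ τ₁ * r ^ 2 / 4) :
    ‖θ - θhat‖ ≤ r / 2 ∧ ‖θ - θ₀‖ ≤ r := by
  have hgrad0 : gradient L θhat = 0 := by
    have hloc : IsLocalMin L θhat := (isMinOn_univ_iff.mpr hmin).isLocalMin Filter.univ_mem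
    simp [gradient, hloc.fderiv_eq_zero]
  have key : ‖θ - θhat‖ ≤ r / 2 := by
    by_contra hd
    push_neg at hd
    set d := ‖θ - θhat‖ with hddef
    have hdpos : 0 < d := lt_trans (by linarith) hd
    set t : ℝ := (r / 2) / d with htdef
    have ht0 : 0 < t := div_pos (by linarith) hdpos
    have ht1 : t < 1 := (div_lt_one hdpos).mpr hd
    set θ' : EuclideanSpace ℝ (Fin p) := θhat + t • (θ - θhat) with hθ'def
    have hdist : ‖θ' - θhat‖ = r / 2 := by
      have h : θ' - θhat = t • (θ - θhat) := by rw [hθ'def]; abel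
      rw [h, norm_smul, Real.norm_eq_abs, abs_of_pos ht0, htdef, ← hddef]
      field_simp
    have hθ'ball : ‖θ' - θ₀‖ ≤ r := by
      calc ‖θ' - θ₀‖ ≤ ‖θ' - θhat‖ + ‖θhat - θ₀‖ := norm_sub_le_norm_sub_add_norm_sub _ _ _
        _ ≤ r / 2 + r / 2 := by rw [hdist]; linarith
        _ = r := by ring
    have hθhatball : ‖θhat - θ₀‖ ≤ r := by linarith
    have hsc := hlsc θ' θhat hθ'ball hθhatball
    rw [hgrad0] at hsc
    simp only [inner_zero_left, zero_add] at hsc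
    rw [hdist] at hsc
    -- convexity bound
    have hconvb : L θ' ≤ (1 - t) * L θhat + t * L θ := by
      have := hconv.2 (Set.mem_univ θhat) (Set.mem_univ θ) (by linarith : (0:ℝ) ≤ 1 - t)
        (le_of_lt ht0) (by ring)
      refine (congrArg L ?_).trans_le this
      rw [hθ'def]
      module
    have h1 : L θ' - L θhat ≤ t * (L θ - L θhat) := by nlinarith
    have hq : 0 < τ₁ * r ^ 2 / 4 := by positivity
    have h2 : t * (L θ - L θhat) < τ₁ * r ^ 2 / 4 := by
      have hlb : 0 ≤ L θ - L θhat := by linarith [hmin θ]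
      have h3 : t * (L θ - L θhat) ≤ t * (τ₁ * r ^ 2 / 4) := by nlinarith
      nlinarith
    have hsq : τ₁ * (r / 2) ^ 2 = τ₁ * r ^ 2 / 4 := by ring
    linarith [hsq ▸ hsc]
  refine ⟨key, ?_⟩
  calc ‖θ - θ₀‖ ≤ ‖θ - θhat‖ + ‖θhat - θ₀‖ := norm_sub_le_norm_sub_add_norm_sub _ _ _
    _ ≤ r / 2 + r / 2 := by linarith
    _ = r := by ring
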